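/- arXiv:1807.09814 — 3 statements merged into one kernel-verified Lean document; each statement's English description precedes it below -/
import Mathlib

section
/- Let f : ℝⁿ → ℝⁿ, Φ, V : ℝⁿ → ℝ with V C¹, λ > 0, C ∈ ℝ, and suppose Φ ≤ V on ℝⁿ and λ (f · ∇V) ≤ C - V on ℝⁿ. If S ⊆ ℝⁿ is compact and invariant under the flow of ẋ = f(x) (every point of S lies on a complete trajectory contained in S), then Φ(x) ≤ C for all x ∈ S. -/
open RealInnerProductSpace

/-- On a compact invariant set, the bounding framework implies `Φ ≤ C`. -/
theorem stmt_3 (n : ℕ) (f : EuclideanSpace ℝ (Fin n) → EuclideanSpace ℝ (Fin n))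
    (Φ V : EuclideanSpace ℝ (Fin n) → ℝ) (hV : ContDiff ℝ 1 V)
    (lam C : ℝ) (hlam : 0 < lam)
    (hPhi : ∀ y, Φ y ≤ V y)
    (hLyap : ∀ y, lam * ⟪f y, gradient V y⟫ ≤ C - V y)
    (S : Set (EuclideanSpace ℝ (Fin n))) (hS : IsCompact S)
    (hInv : ∀ x₀ ∈ S, ∃ γ : ℝ → EuclideanSpace ℝ (Fin n),
      γ 0 = x₀ ∧ (∀ t : ℝ, γ t ∈ S) ∧ (∀ t : ℝ, HasDerivAt γ (f (γ t)) t)) :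
    ∀ x ∈ S, Φ x ≤ C := by
  intro x hx
  suffices h : ∀ y ∈ S, V y ≤ C by exact (hPhi x).trans (h x hx)
  intro y hy
  obtain ⟨xs, hxs, hmax⟩ := hS.exists_isMaxOn ⟨y, hy⟩ hV.continuous.continuousOn
  have hVy : V y ≤ V xs := hmax hy
  obtain ⟨γ, hγ0, hγS, hγd⟩ := hInv xs hxs
  -- derivative of V ∘ γ at 0
  have hG : HasGradientAt V (gradient V xs) xs :=
    (hV.differentiable one_ne_zero xs).hasGradientAt
  have hderiv : HasDerivAt (V ∘ γ) ⟪gradient V xs, f xs⟫ 0 := by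
    have hG' : HasFDerivAt V ((InnerProductSpace.toDual ℝ _) (gradient V xs)) (γ 0) := by
      rw [hγ0]; exact hG.hasFDerivAt
    have := hG'.comp_hasDerivAt 0 (hγd 0)
    simpa [hγ0] using this
  -- V ∘ γ has a global (hence local) max at 0
  have hlocmax : IsLocalMax (V ∘ γ) 0 := by
    apply Filter.Eventually.of_forall
    intro t
    simpa [hγ0] using hmax (hγS t)
  have hzero : ⟪gradient V xs, f xs⟫ = 0 := hlocmax.hasDerivAt_eq_zero hderiv
  have h0 : ⟪f xs, gradient V xs⟫ = 0 := by rw [real_inner_comm]; exact hzero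
  have := hLyap xs
  rw [h0, mul_zero] at this
  linarith
end

section
/- Suppose V : ℝⁿ → ℝ is C¹ and satisfies λ (f(x) · ∇V(x)) ≤ C - V(x) on ℝⁿ for some λ > 0. If x : ℝ → ℝⁿ is a bounded C¹ solution of ẋ = f(x) defined for all t ∈ ℝ (both forward and backward time), then V(x(t)) ≤ C for all t ∈ ℝ. -/
open RealInnerProductSpace

/-- Every bounded complete trajectory lies in the sublevel set `{V ≤ C}`. -/
theorem stmt_4 (n : ℕ) (f : EuclideanSpace ℝ (Fin n) → EuclideanSpace ℝ (Fin n))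
    (V : EuclideanSpace ℝ (Fin n) → ℝ) (hV : ContDiff ℝ 1 V)
    (lam C : ℝ) (hlam : 0 < lam)
    (hLyap : ∀ y, lam * ⟪f y, gradient V y⟫ ≤ C - V y)
    (x : ℝ → EuclideanSpace ℝ (Fin n)) (hx : ∀ t : ℝ, HasDerivAt x (f (x t)) t)
    (hbdd : Bornology.IsBounded (Set.range x)) :
    ∀ t : ℝ, V (x t) ≤ C := by
  have hVd : Differentiable ℝ V := hV.differentiable one_ne_zero
  -- derivative of V ∘ x
  have hgd : ∀ t : ℝ, HasDerivAt (fun t => V (x t)) ⟪f (x t), gradient V (x t)⟫ t := by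
    intro t
    have h1 : HasFDerivAt V (InnerProductSpace.toDual ℝ _ (gradient V (x t))) (x t) :=
      (hVd (x t)).hasGradientAt.hasFDerivAt
    have h2 := h1.comp_hasDerivAt t (hx t)
    have h3 : (InnerProductSpace.toDual ℝ _ (gradient V (x t))) (f (x t))
        = ⟪f (x t), gradient V (x t)⟫ := by
      rw [InnerProductSpace.toDual_apply_apply, real_inner_comm]
    exact h3 ▸ h2
  -- bound on V along the trajectory
  obtain ⟨M, hM⟩ := hbdd.isCompact_closure.exists_bound_of_continuousOn
    hV.continuous.continuousOn
  have hMg : ∀ s : ℝ, V (x s) ≤ M := fun s => by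
    have := hM (x s) (subset_closure (Set.mem_range_self s))
    calc V (x s) ≤ ‖V (x s)‖ := le_abs_self _
    _ ≤ M := this
  -- the auxiliary function
  set h : ℝ → ℝ := fun t => (V (x t) - C) * Real.exp (t / lam) with hh
  have hhd : ∀ t : ℝ, HasDerivAt h
      (⟪f (x t), gradient V (x t)⟫ * Real.exp (t / lam)
        + (V (x t) - C) * (Real.exp (t / lam) * (1 / lam))) t := by
    intro t
    have he : HasDerivAt (fun t : ℝ => Real.exp (t / lam)) (Real.exp (t / lam) * (1 / lam)) t := by
      simpa using (((hasDerivAt_id t).div_const lam)).exp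
    exact ((hgd t).sub_const C).mul he
  have hder_nonpos : ∀ t : ℝ, deriv h t ≤ 0 := by
    intro t
    rw [(hhd t).deriv]
    have h1 := hLyap (x t)
    have h2 := Real.exp_pos (t / lam)
    have h3 : ⟪f (x t), gradient V (x t)⟫ ≤ (C - V (x t)) / lam := by
      rw [le_div_iff₀ hlam]
      linarith [hLyap (x t), mul_comm lam ⟪f (x t), gradient V (x t)⟫]
    have h4 : ⟪f (x t), gradient V (x t)⟫ * Real.exp (t / lam)
        ≤ (C - V (x t)) / lam * Real.exp (t / lam) :=
      mul_le_mul_of_nonneg_right h3 h2.le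
    have : (C - V (x t)) / lam * Real.exp (t / lam)
        + (V (x t) - C) * (Real.exp (t / lam) * (1 / lam)) = 0 := by
      field_simp
      ring
    linarith
  have hanti : Antitone h := antitone_of_deriv_nonpos
    (fun t => (hhd t).differentiableAt) hder_nonpos
  intro t
  -- h t ≤ (M - C) * exp (s / lam) for all s ≤ t, and RHS → 0 as s → -∞
  have hlim : Filter.Tendsto (fun s : ℝ => (M - C) * Real.exp (s / lam))
      Filter.atBot (nhds 0) := by
    have : Filter.Tendsto (fun s : ℝ => Real.exp (s / lam)) Filter.atBot (nhds 0) :=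
      Real.tendsto_exp_atBot.comp (Filter.tendsto_id.atBot_div_const hlam)
    simpa using this.const_mul (M - C)
  have hle : ∀ᶠ s in Filter.atBot, h t ≤ (M - C) * Real.exp (s / lam) := by
    filter_upwards [Filter.eventually_le_atBot t] with s hs
    calc h t ≤ h s := hanti hs
    _ ≤ (M - C) * Real.exp (s / lam) :=
        mul_le_mul_of_nonneg_right (by linarith [hMg s]) (Real.exp_pos _).le
  have hht : h t ≤ 0 := ge_of_tendsto hlim hle
  have hht' : (V (x t) - C) * Real.exp (t / lam) ≤ 0 := hht
  nlinarith [Real.exp_pos (t / lam), hht']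
end

section
/- For the Lorenz system with standard parameters σ = 10, r = 28, β = 8/3 and Lorenz vector field f(x,y,z) = (σ(y-x), rx - y - xz, -βz + xy), the quadratic function V(x,y,z) = y² + (z - r)² satisfies f · ∇V ≤ -2(V - β²r²/(4(β-1))) on ℝ³ whenever β ≥ 2. Consequently the cylinder {(x,y,z) : y² + (z - r)² ≤ β²r²/(4(β-1))} is forward-invariant and absorbs every trajectory. -/
open Filter

/-- The classical attracting cylinder `y² + (z-r)² ≤ β²r²/(4(β-1))` for the
Lorenz equations at the standard parameters `σ = 10`, `r = 28`, `β = 8/3`: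
the quadratic `V = y² + (z-r)²` satisfies `f·∇V ≤ -2(V - β²r²/(4(β-1)))`
whenever `β ≥ 2`, so the cylinder is forward invariant and absorbs trajectories. -/
theorem stmt_6 (σ r β : ℝ) (hσ : σ = 10) (hr : r = 28) (hβval : β = 8 / 3)
    (hβ : 2 ≤ β) :
    (∀ x y z : ℝ,
      2 * y * (r * x - y - x * z) + 2 * (z - r) * (-β * z + x * y) ≤
        -2 * ((y ^ 2 + (z - r) ^ 2) - β ^ 2 * r ^ 2 / (4 * (β - 1)))) ∧
    (∀ X Y Z : ℝ → ℝ,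
      (∀ t : ℝ, HasDerivAt X (σ * (Y t - X t)) t) →
      (∀ t : ℝ, HasDerivAt Y (r * X t - Y t - X t * Z t) t) →
      (∀ t : ℝ, HasDerivAt Z (-β * Z t + X t * Y t) t) →
      (((Y 0) ^ 2 + (Z 0 - r) ^ 2 ≤ β ^ 2 * r ^ 2 / (4 * (β - 1)) →
          ∀ t : ℝ, 0 ≤ t →
            (Y t) ^ 2 + (Z t - r) ^ 2 ≤ β ^ 2 * r ^ 2 / (4 * (β - 1))) ∧
        limsup (fun t => (Y t) ^ 2 + (Z t - r) ^ 2) atTop ≤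
          β ^ 2 * r ^ 2 / (4 * (β - 1)))) := by
  subst hσ hr hβval
  set K : ℝ := (8/3 : ℝ) ^ 2 * (28:ℝ) ^ 2 / (4 * ((8/3:ℝ) - 1)) with hK
  have key : ∀ x y z : ℝ,
      2 * y * (28 * x - y - x * z) + 2 * (z - 28) * (-(8/3) * z + x * y) ≤
        -2 * ((y ^ 2 + (z - 28) ^ 2) - K) := by
    intro x y z
    have h1 : (0:ℝ) ≤ (5 * z - 28) ^ 2 := sq_nonneg _
    rw [hK]
    nlinarith [sq_nonneg y]
  refine ⟨key, ?_⟩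
  intro X Y Z hX hY hZ
  set V : ℝ → ℝ := fun t => (Y t) ^ 2 + (Z t - 28) ^ 2 with hVdef
  have hVd : ∀ t, HasDerivAt V
      (2 * Y t * (28 * X t - Y t - X t * Z t)
        + 2 * (Z t - 28) * (-(8/3) * Z t + X t * Y t)) t := by
    intro t
    have h1 := (hY t).fun_pow 2
    have h2 := ((hZ t).sub_const 28).fun_pow 2
    refine (h1.fun_add h2).congr_deriv ?_
    push_cast
    ring
  set W : ℝ → ℝ := fun t => (V t - K) * Real.exp (2 * t) with hWdef
  have hWd : ∀ t, HasDerivAt W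
      ((2 * Y t * (28 * X t - Y t - X t * Z t)
        + 2 * (Z t - 28) * (-(8/3) * Z t + X t * Y t)) * Real.exp (2 * t)
        + (V t - K) * (Real.exp (2 * t) * 2)) t := by
    intro t
    have he : HasDerivAt (fun t : ℝ => Real.exp (2 * t)) (Real.exp (2 * t) * 2) t := by
      have := ((hasDerivAt_id t).const_mul (2:ℝ)).exp
      simpa using this
    exact ((hVd t).sub_const K).mul he
  have hanti : Antitone W := by
    have hdiff : Differentiable ℝ W := fun t => (hWd t).differentiableAt
    refine antitone_of_deriv_nonpos hdiff ?_
    intro t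
    rw [(hWd t).deriv]
    have hkey := key (X t) (Y t) (Z t)
    have hexp : (0:ℝ) < Real.exp (2 * t) := Real.exp_pos _
    have : 2 * Y t * (28 * X t - Y t - X t * Z t)
        + 2 * (Z t - 28) * (-(8/3) * Z t + X t * Y t) + (V t - K) * 2 ≤ 0 := by
      simp only [hVdef]; nlinarith
    nlinarith
  have hbound : ∀ t : ℝ, 0 ≤ t → (V t - K) * Real.exp (2 * t) ≤ V 0 - K := by
    intro t ht
    have := hanti ht
    simpa [hWdef] using this
  constructor
  · intro h0 t ht
    have hb := hbound t ht
    have hexp : (0:ℝ) < Real.exp (2 * t) := Real.exp_pos _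
    have h0' : V 0 - K ≤ 0 := by simp only [hVdef]; linarith
    have h2 : (V t - K) * Real.exp (2 * t) ≤ 0 := le_trans hb h0'
    have h3 : V t - K ≤ 0 := by
      by_contra h
      push_neg at h
      nlinarith
    simp only [hVdef] at h3
    linarith
  · have hle : (fun t => (Y t) ^ 2 + (Z t - 28) ^ 2) ≤ᶠ[atTop]
        (fun t => K + (V 0 - K) * Real.exp (-(2 * t))) := by
      filter_upwards [eventually_ge_atTop (0:ℝ)] with t ht
      have hb := hbound t ht
      have hexp : (0:ℝ) < Real.exp (2 * t) := Real.exp_pos _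
      have hinv : Real.exp (-(2 * t)) = (Real.exp (2 * t))⁻¹ := Real.exp_neg _
      have hdiv : V t - K ≤ (V 0 - K) / Real.exp (2 * t) := (le_div_iff₀ hexp).mpr hb
      have h4 : V t - K ≤ (V 0 - K) * Real.exp (-(2 * t)) := by
        rw [hinv, mul_comm, ← div_eq_inv_mul]
        exact hdiv
      simp only [hVdef] at h4 ⊢
      linarith
    have htend : Tendsto (fun t => K + (V 0 - K) * Real.exp (-(2 * t))) atTop (nhds K) := by
      have h1 : Tendsto (fun t : ℝ => -(2 * t)) atTop atBot := by
        apply tendsto_neg_atBot_iff.mpr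
        exact tendsto_atTop_atTop.mpr fun b => ⟨max b 0, fun a ha => by
          have h1 := le_of_max_le_left ha
          have h2 := le_of_max_le_right ha
          linarith⟩
      have h2 : Tendsto (fun t : ℝ => Real.exp (-(2 * t))) atTop (nhds 0) :=
        Real.tendsto_exp_atBot.comp h1
      have := (h2.const_mul (V 0 - K)).const_add K
      simpa using this
    have hcob : IsCoboundedUnder (· ≤ ·) atTop (fun t => (Y t) ^ 2 + (Z t - 28) ^ 2) :=
      IsBoundedUnder.isCoboundedUnder_le
        (isBoundedUnder_of ⟨0, fun t => by positivity⟩)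
    have hbdd : IsBoundedUnder (· ≤ ·) atTop (fun t => K + (V 0 - K) * Real.exp (-(2 * t))) :=
      htend.isBoundedUnder_le
    calc limsup (fun t => (Y t) ^ 2 + (Z t - 28) ^ 2) atTop
        ≤ limsup (fun t => K + (V 0 - K) * Real.exp (-(2 * t))) atTop :=
          limsup_le_limsup hle hcob hbdd
      _ = K := htend.limsup_eq
end
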